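/- Suppose m, n, c ≥ 1 and m ≥ n + 2c. Then Pr[|I₂ ∩ B_Old^π| ≥ 1] ≥ Pr[|J₂ ∩ S_Old^π| ≥ 1] ≥ n/(20m), where Pr is over a uniformly random valid assignment π. -/

import Mathlib

open Finset

/-- Labels for agents: old buyer, new buyer, old seller, new seller. -/
inductive Label : Type
  | BO | BN | SO | SN
deriving DecidableEq

instance instFintypeLabel : Fintype Label :=
  ⟨{.BO, .BN, .SO, .SN}, fun x => by cases x <;> simp⟩

/-- Total number of agents: `m` old buyers, `n` old sellers, `c` new buyers and `c` new
sellers. -/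
def NN (m n c : ℕ) : ℕ := m + n + 2 * c

/-- The set of indices carrying a given label under the assignment `π`. -/
def labelSet (m n c : ℕ) (L : Label) (π : Fin (NN m n c) → Label) :
    Finset (Fin (NN m n c)) :=
  Finset.univ.filter (fun i => π i = L)

/-- Valid assignments: exactly `m` old buyers, `c` new buyers, `n` old sellers and
`c` new sellers. -/
def validAssignments (m n c : ℕ) : Finset (Fin (NN m n c) → Label) :=
  Finset.univ.filter (fun π =>
    (labelSet m n c .BO π).card = m ∧ (labelSet m n c .BN π).card = c ∧
    (labelSet m n c .SO π).card = n ∧ (labelSet m n c .SN π).card = c)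

/-- `p = ⌈n/10⌉`. -/
def pVal (n : ℕ) : ℕ := (n + 9) / 10

/-- `I₁`: the indices of the top `p` quantiles (1-based indices `{1,…,p}`). -/
def I1 (m n c : ℕ) : Finset (Fin (NN m n c)) :=
  Finset.univ.filter (fun i => (i : ℕ) < pVal n)

/-- `I₂`: 1-based indices `{p+1,…,2p}`. -/
def I2 (m n c : ℕ) : Finset (Fin (NN m n c)) :=
  Finset.univ.filter (fun i => pVal n ≤ (i : ℕ) ∧ (i : ℕ) < 2 * pVal n)

/-- `J₁`: 1-based indices `{N-p+1,…,N}`. -/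
def J1 (m n c : ℕ) : Finset (Fin (NN m n c)) :=
  Finset.univ.filter (fun i => NN m n c - pVal n ≤ (i : ℕ))

/-- `J₂`: 1-based indices `{N-2p+1,…,N-p}`. -/
def J2 (m n c : ℕ) : Finset (Fin (NN m n c)) :=
  Finset.univ.filter (fun i =>
    NN m n c - 2 * pVal n ≤ (i : ℕ) ∧ (i : ℕ) < NN m n c - pVal n)

/-- The good event `E₁`: at least 2 new buyers in `I₁`, at least 1 old buyer in `I₂`,
at least 2 new sellers in `J₁`, at least 1 old seller in `J₂`. -/
def E1 (m n c : ℕ) : Finset (Fin (NN m n c) → Label) :=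
  (validAssignments m n c).filter (fun π =>
    2 ≤ (I1 m n c ∩ labelSet m n c .BN π).card ∧
    1 ≤ (I2 m n c ∩ labelSet m n c .BO π).card ∧
    2 ≤ (J1 m n c ∩ labelSet m n c .SN π).card ∧
    1 ≤ (J2 m n c ∩ labelSet m n c .SO π).card)

/-- The bad event `E₂`: `E₁` fails and all new sellers are among the top `2n + 2c`
indices. -/
def E2 (m n c : ℕ) : Finset (Fin (NN m n c) → Label) :=
  (validAssignments m n c).filter (fun π =>
    π ∉ E1 m n c ∧ ∀ i ∈ labelSet m n c .SN π, (i : ℕ) < 2 * n + 2 * c)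

/-- The probability of an event under a uniformly random valid assignment. -/
noncomputable def prOf (m n c : ℕ) (E : Finset (Fin (NN m n c) → Label)) : ℝ :=
  (E.card : ℝ) / (validAssignments m n c).card


section Machinery

variable {m n c : ℕ}

lemma labelSet_comp_perm (L : Label) (π : Fin (NN m n c) → Label)
    (σ : Equiv.Perm (Fin (NN m n c))) :
    labelSet m n c L (π ∘ σ) = (labelSet m n c L π).map σ.symm.toEmbedding := by
  ext i
  simp [labelSet, Finset.mem_map_equiv]

lemma card_labelSet_comp (L : Label) (π : Fin (NN m n c) → Label)
    (σ : Equiv.Perm (Fin (NN m n c))) :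
    (labelSet m n c L (π ∘ σ)).card = (labelSet m n c L π).card := by
  rw [labelSet_comp_perm]; exact Finset.card_map _

lemma mem_valid_comp (π : Fin (NN m n c) → Label) (σ : Equiv.Perm (Fin (NN m n c)))
    (h : π ∈ validAssignments m n c) : (π ∘ σ) ∈ validAssignments m n c := by
  simp only [validAssignments, Finset.mem_filter, Finset.mem_univ, true_and] at h ⊢
  simp [card_labelSet_comp, h.1, h.2.1, h.2.2.1, h.2.2.2]

lemma fiber_card_eq (L : Label) (S T : Finset (Fin (NN m n c)))
    (hcard : S.card = T.card) :
    ((validAssignments m n c).filter (fun π => labelSet m n c L π = S)).card =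
    ((validAssignments m n c).filter (fun π => labelSet m n c L π = T)).card := by
  classical
  have e : {x // x ∈ T} ≃ {x // x ∈ S} :=
    Fintype.equivOfCardEq (by simp [Fintype.card_coe, hcard])
  have f : {x // ¬ x ∈ T} ≃ {x // ¬ x ∈ S} :=
    Fintype.equivOfCardEq (by
      rw [Fintype.card_subtype_compl, Fintype.card_subtype_compl]
      simp [Fintype.card_coe, hcard])
  set σ : Equiv.Perm (Fin (NN m n c)) := Equiv.subtypeCongr e f with hσdef
  have hσ : ∀ x, σ x ∈ S ↔ x ∈ T := by
    intro x
    by_cases h : x ∈ T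
    · simp only [hσdef, Equiv.subtypeCongr, Equiv.trans_apply,
        Equiv.sumCompl_symm_apply_of_pos h, Equiv.sumCongr_apply, Sum.map_inl,
        Equiv.sumCompl_apply_inl]
      exact iff_of_true (e ⟨x, h⟩).2 h
    · simp only [hσdef, Equiv.subtypeCongr, Equiv.trans_apply,
        Equiv.sumCompl_symm_apply_of_neg h, Equiv.sumCongr_apply, Sum.map_inr,
        Equiv.sumCompl_apply_inr]
      exact iff_of_false (f ⟨x, h⟩).2 h
  refine Finset.card_bij' (fun π _ => π ∘ σ) (fun π _ => π ∘ σ.symm) ?_ ?_ ?_ ?_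
  · intro π hπ
    simp only [Finset.mem_filter] at hπ ⊢
    refine ⟨mem_valid_comp π σ hπ.1, ?_⟩
    ext i
    simp only [labelSet, Finset.mem_filter, Finset.mem_univ, true_and, Function.comp_apply]
    rw [show (π (σ i) = L ↔ σ i ∈ labelSet m n c L π) by simp [labelSet], hπ.2]
    exact hσ i
  · intro π hπ
    simp only [Finset.mem_filter] at hπ ⊢
    refine ⟨mem_valid_comp π σ.symm hπ.1, ?_⟩
    ext i
    simp only [labelSet, Finset.mem_filter, Finset.mem_univ, true_and, Function.comp_apply]
    rw [show (π (σ.symm i) = L ↔ σ.symm i ∈ labelSet m n c L π) by simp [labelSet], hπ.2]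
    rw [← hσ (σ.symm i), Equiv.apply_symm_apply]
  · intro π _; funext i; simp
  · intro π _; funext i; simp

lemma count_avoid (L : Label) (k : ℕ)
    (hk : ∀ π ∈ validAssignments m n c, (labelSet m n c L π).card = k)
    (A : Finset (Fin (NN m n c))) :
    ((validAssignments m n c).filter
        (fun π => (A ∩ labelSet m n c L π).card = 0)).card * (NN m n c).choose k
      = (validAssignments m n c).card * ((NN m n c) - A.card).choose k := by
  classical
  set V := validAssignments m n c with hV
  set avoid := V.filter (fun π => (A ∩ labelSet m n c L π).card = 0) with havoid
  have hVsum : V.card = ∑ S ∈ Finset.powersetCard k (Finset.univ : Finset (Fin (NN m n c))),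
      (V.filter (fun π => labelSet m n c L π = S)).card := by
    apply Finset.card_eq_sum_card_fiberwise
    intro π hπ
    rw [Finset.mem_coe, Finset.mem_powersetCard]
    exact ⟨Finset.subset_univ _, hk π hπ⟩
  have hAsum : avoid.card = ∑ S ∈ Finset.powersetCard k (Finset.univ \ A),
      (V.filter (fun π => labelSet m n c L π = S)).card := by
    have h1 : avoid.card = ∑ S ∈ Finset.powersetCard k (Finset.univ \ A),
        (avoid.filter (fun π => labelSet m n c L π = S)).card := by
      apply Finset.card_eq_sum_card_fiberwise
      intro π hπ
      rw [Finset.mem_coe, Finset.mem_powersetCard]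
      simp only [havoid, Finset.mem_coe, Finset.mem_filter] at hπ
      constructor
      · intro i hi
        simp only [Finset.mem_sdiff, Finset.mem_univ, true_and]
        intro hiA
        have : i ∈ A ∩ labelSet m n c L π := Finset.mem_inter.2 ⟨hiA, hi⟩
        rw [Finset.card_eq_zero] at hπ
        simp [hπ.2] at this
      · exact hk π hπ.1
    rw [h1]
    apply Finset.sum_congr rfl
    intro S hS
    congr 1
    rw [Finset.mem_powersetCard] at hS
    ext π
    simp only [havoid, Finset.mem_filter, and_assoc]
    constructor
    · tauto
    · intro ⟨h1, h2⟩
      refine ⟨h1, ?_, h2⟩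
      rw [Finset.card_eq_zero, ← Finset.disjoint_iff_inter_eq_empty]
      rw [h2]
      intro x hxA hxS
      intro i hi
      have := hS.1 (hxS hi)
      simp only [Finset.mem_sdiff] at this
      exact absurd (hxA hi) this.2
  -- double counting
  have key : avoid.card * (Finset.powersetCard k (Finset.univ : Finset (Fin (NN m n c)))).card
      = V.card * (Finset.powersetCard k (Finset.univ \ A)).card := by
    rw [hVsum, hAsum, Finset.sum_mul, Finset.sum_mul]
    calc ∑ S ∈ Finset.powersetCard k (Finset.univ \ A),
          (V.filter (fun π => labelSet m n c L π = S)).card *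
            (Finset.powersetCard k (Finset.univ : Finset (Fin (NN m n c)))).card
        = ∑ S ∈ Finset.powersetCard k (Finset.univ \ A),
            ∑ _T ∈ Finset.powersetCard k (Finset.univ : Finset (Fin (NN m n c))),
              (V.filter (fun π => labelSet m n c L π = S)).card := by
          refine Finset.sum_congr rfl fun S _ => ?_
          rw [Finset.sum_const, smul_eq_mul, mul_comm]
      _ = ∑ T ∈ Finset.powersetCard k (Finset.univ : Finset (Fin (NN m n c))),
            ∑ S ∈ Finset.powersetCard k (Finset.univ \ A),
              (V.filter (fun π => labelSet m n c L π = S)).card := Finset.sum_comm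
      _ = ∑ T ∈ Finset.powersetCard k (Finset.univ : Finset (Fin (NN m n c))),
            ∑ _S ∈ Finset.powersetCard k (Finset.univ \ A),
              (V.filter (fun π => labelSet m n c L π = T)).card := by
          refine Finset.sum_congr rfl fun T hT => Finset.sum_congr rfl fun S hS => ?_
          exact fiber_card_eq L S T (by
            rw [(Finset.mem_powersetCard.1 hS).2, (Finset.mem_powersetCard.1 hT).2])
      _ = ∑ T ∈ Finset.powersetCard k (Finset.univ : Finset (Fin (NN m n c))),
            (V.filter (fun π => labelSet m n c L π = T)).card *
              (Finset.powersetCard k (Finset.univ \ A)).card := by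
          refine Finset.sum_congr rfl fun T _ => ?_
          rw [Finset.sum_const, smul_eq_mul, mul_comm]
  have h1 : (Finset.powersetCard k (Finset.univ : Finset (Fin (NN m n c)))).card
      = (NN m n c).choose k := by
    rw [Finset.card_powersetCard, Finset.card_univ, Fintype.card_fin]
  have h2 : (Finset.powersetCard k (Finset.univ \ A)).card
      = ((NN m n c) - A.card).choose k := by
    rw [Finset.card_powersetCard, Finset.card_sdiff_of_subset (Finset.subset_univ A),
      Finset.card_univ, Fintype.card_fin]
  rw [← h1, ← h2]
  exact key

end Machinery



section
open Nat
lemma choose_swap (N k p : ℕ) :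
    N.choose k * (N - k).choose p = N.choose p * (N - p).choose k := by
  by_cases h : k + p ≤ N
  · have key : ∀ a b : ℕ, a + b ≤ N →
        N.choose a * (N - a).choose b * (a ! * b ! * (N - a - b)!) = N ! := by
      intro a b hab
      have h1 := Nat.choose_mul_factorial_mul_factorial (show a ≤ N by omega)
      have h2 := Nat.choose_mul_factorial_mul_factorial (show b ≤ N - a by omega)
      have e : N.choose a * (N - a).choose b * (a ! * b ! * (N - a - b)!) =
          (N.choose a * a !) * ((N - a).choose b * b ! * (N - a - b)!) := by ring
      rw [e, h2]
      exact h1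
    have e1 := key k p h
    have e2 := key p k (by omega)
    have hpos : 0 < k ! * p ! * (N - k - p)! :=
      Nat.mul_pos (Nat.mul_pos (Nat.factorial_pos _) (Nat.factorial_pos _)) (Nat.factorial_pos _)
    apply Nat.eq_of_mul_eq_mul_right hpos
    rw [e1]
    have : N - p - k = N - k - p := by omega
    rw [this] at e2
    rw [← e2]; ring
  · rcases le_or_gt k N with hk | hk
    · have : (N - k).choose p = 0 := Nat.choose_eq_zero_of_lt (by omega)
      rw [this, Nat.mul_zero]
      rcases le_or_gt p N with hp | hp
      · have : (N - p).choose k = 0 := Nat.choose_eq_zero_of_lt (by omega)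
        rw [this, Nat.mul_zero]
      · rw [Nat.choose_eq_zero_of_lt hp, Nat.zero_mul]
    · rw [Nat.choose_eq_zero_of_lt hk, Nat.zero_mul,
        Nat.choose_eq_zero_of_lt (show N - p < k by omega), Nat.mul_zero]

lemma card_filter_ico (N a b : ℕ) (hb : b ≤ N) :
    (Finset.univ.filter (fun i : Fin N => a ≤ (i : ℕ) ∧ (i : ℕ) < b)).card = b - a := by
  rw [← Nat.card_Ico a b]
  refine Finset.card_bij (fun (i : Fin N) _ => (i : ℕ)) ?_ ?_ ?_
  · intro i hi; simp only [Finset.mem_filter] at hi; simp [Finset.mem_Ico]; omega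
  · intro i hi j hj h; exact Fin.val_injective h
  · intro x hx
    simp only [Finset.mem_Ico] at hx
    exact ⟨⟨x, by omega⟩, by simp; omega, rfl⟩
end


lemma valid_nonempty (m n c : ℕ) : 0 < (validAssignments m n c).card := by
  classical
  rw [Finset.card_pos]
  refine ⟨fun i => if (i:ℕ) < m then .BO else if (i:ℕ) < m + c then .BN
    else if (i:ℕ) < m + c + n then .SO else .SN, ?_⟩
  have hNN : NN m n c = m + n + 2 * c := rfl
  rw [validAssignments, Finset.mem_filter]
  simp only [labelSet, Finset.mem_univ, true_and]
  have key : ∀ (L : Label) (a b : ℕ), b ≤ NN m n c →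
      (∀ i : Fin (NN m n c),
        ((if (i:ℕ) < m then Label.BO else if (i:ℕ) < m + c then Label.BN
          else if (i:ℕ) < m + c + n then Label.SO else Label.SN) = L
          ↔ (a ≤ (i:ℕ) ∧ (i:ℕ) < b))) →
      (Finset.univ.filter (fun i : Fin (NN m n c) =>
        (if (i:ℕ) < m then Label.BO else if (i:ℕ) < m + c then Label.BN
          else if (i:ℕ) < m + c + n then Label.SO else Label.SN) = L)).card = b - a := by
    intro L a b hb hiff
    rw [Finset.filter_congr (fun i _ => hiff i)]
    exact card_filter_ico _ a b hb
  refine ⟨?_, ?_, ?_, ?_⟩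
  · rw [key .BO 0 m (by omega) (fun i => by split_ifs <;> simp <;> omega)]
    omega
  · rw [key .BN m (m + c) (by omega) (fun i => by split_ifs <;> simp <;> omega)]; omega
  · rw [key .SO (m + c) (m + c + n) (by omega) (fun i => by split_ifs <;> simp <;> omega)]
    omega
  · rw [key .SN (m + c + n) (NN m n c) (by omega)
      (fun i => by split_ifs <;> simp <;> omega)]
    omega
/-- If `m, n, c ≥ 1` and `m ≥ n + 2c`, then
`Pr[|I₂ ∩ B_Old| ≥ 1] ≥ Pr[|J₂ ∩ S_Old| ≥ 1] ≥ n/(20m)`. -/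
theorem pr_old_in_I2_J2 (m n c : ℕ) (hn : 1 ≤ n) (hc : 1 ≤ c) (hm : n + 2 * c ≤ m) :
    prOf m n c ((validAssignments m n c).filter
        (fun π => 1 ≤ (J2 m n c ∩ labelSet m n c .SO π).card)) ≤
      prOf m n c ((validAssignments m n c).filter
        (fun π => 1 ≤ (I2 m n c ∩ labelSet m n c .BO π).card)) ∧
    (n : ℝ) / (20 * (m : ℝ)) ≤
      prOf m n c ((validAssignments m n c).filter
        (fun π => 1 ≤ (J2 m n c ∩ labelSet m n c .SO π).card)) := by
  classical
  have hNN0 : NN m n c = m + n + 2 * c := rfl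
  have hpv0 : pVal n = (n + 9) / 10 := rfl
  -- split each event's cardinality
  have hsplit : ∀ (A : Finset (Fin (NN m n c))) (L : Label),
      ((validAssignments m n c).filter
          (fun π => 1 ≤ (A ∩ labelSet m n c L π).card)).card
        + ((validAssignments m n c).filter
          (fun π => (A ∩ labelSet m n c L π).card = 0)).card
      = (validAssignments m n c).card := by
    intro A L
    have h := Finset.card_filter_add_card_filter_not
      (s := validAssignments m n c) (p := fun π => 1 ≤ (A ∩ labelSet m n c L π).card)
    rwa [Finset.filter_congr (p := fun π => ¬ 1 ≤ (A ∩ labelSet m n c L π).card)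
      (q := fun π => (A ∩ labelSet m n c L π).card = 0)
      (fun π _ => by simp only [not_le, Nat.lt_one_iff])] at h
  have hSO : ∀ π ∈ validAssignments m n c, (labelSet m n c .SO π).card = n := by
    intro π h
    simp only [validAssignments, Finset.mem_filter] at h
    exact h.2.2.2.1
  have hBO : ∀ π ∈ validAssignments m n c, (labelSet m n c .BO π).card = m := by
    intro π h
    simp only [validAssignments, Finset.mem_filter] at h
    exact h.2.1
  simp only [prOf]
  set N := NN m n c with hN
  set p := pVal n with hp
  have hNN : N = m + n + 2 * c := hNN0
  have hp10 : p = (n + 9) / 10 := hpv0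
  have hp1 : 1 ≤ p := by omega
  have hpn : p ≤ n := by omega
  have h2p : 2 * p ≤ N := by omega
  have hI2 : (I2 m n c).card = p := by
    unfold I2
    rw [card_filter_ico _ _ _ (by omega : 2 * pVal n ≤ NN m n c)]
    omega
  have hJ2 : (J2 m n c).card = p := by
    unfold J2
    rw [card_filter_ico _ _ _ (by omega : NN m n c - pVal n ≤ NN m n c)]
    omega
  set V := (validAssignments m n c).card with hVdef
  set Hs := ((validAssignments m n c).filter
    (fun π => 1 ≤ (J2 m n c ∩ labelSet m n c .SO π).card)).card with hHsdef
  set Hb := ((validAssignments m n c).filter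
    (fun π => 1 ≤ (I2 m n c ∩ labelSet m n c .BO π).card)).card with hHbdef
  set As := ((validAssignments m n c).filter
    (fun π => (J2 m n c ∩ labelSet m n c .SO π).card = 0)).card with hAsdef
  set Ab := ((validAssignments m n c).filter
    (fun π => (I2 m n c ∩ labelSet m n c .BO π).card = 0)).card with hAbdef
  have hVpos : 0 < V := valid_nonempty m n c
  have hs : Hs + As = V := hsplit (J2 m n c) .SO
  have hb : Hb + Ab = V := hsplit (I2 m n c) .BO
  have hAs : As * N.choose n = V * (N - p).choose n := by
    have h := count_avoid .SO n hSO (J2 m n c)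
    rw [hJ2] at h
    exact h
  have hAb : Ab * N.choose m = V * (N - p).choose m := by
    have h := count_avoid .BO m hBO (I2 m n c)
    rw [hI2] at h
    exact h
  have hCn : 0 < N.choose n := Nat.choose_pos (by omega)
  have hCm : 0 < N.choose m := Nat.choose_pos (by omega)
  have hCp : 0 < N.choose p := Nat.choose_pos (by omega)
  -- part 1 (ℕ)
  have hcmp : (N - p).choose m * N.choose n ≤ (N - p).choose n * N.choose m := by
    have h1 := choose_swap N m p
    have h2 := choose_swap N n p
    have h3 : (N - m).choose p ≤ (N - n).choose p :=
      Nat.choose_le_choose _ (by omega)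
    apply Nat.le_of_mul_le_mul_left _ hCp
    calc N.choose p * ((N - p).choose m * N.choose n)
        = (N.choose p * (N - p).choose m) * N.choose n := by ring
      _ = (N.choose m * (N - m).choose p) * N.choose n := by rw [← h1]
      _ ≤ (N.choose m * (N - n).choose p) * N.choose n :=
          Nat.mul_le_mul_right _ (Nat.mul_le_mul_left _ h3)
      _ = (N.choose n * (N - n).choose p) * N.choose m := by ring
      _ = (N.choose p * (N - p).choose n) * N.choose m := by rw [h2]
      _ = N.choose p * ((N - p).choose n * N.choose m) := by ring
  have hAbAs : Ab ≤ As := by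
    have hpos : 0 < N.choose n * N.choose m := Nat.mul_pos hCn hCm
    apply Nat.le_of_mul_le_mul_right _ hpos
    calc Ab * (N.choose n * N.choose m)
        = (Ab * N.choose m) * N.choose n := by ring
      _ = (V * (N - p).choose m) * N.choose n := by rw [hAb]
      _ = V * ((N - p).choose m * N.choose n) := by ring
      _ ≤ V * ((N - p).choose n * N.choose m) := Nat.mul_le_mul_left _ hcmp
      _ = (V * (N - p).choose n) * N.choose m := by ring
      _ = (As * N.choose n) * N.choose m := by rw [hAs]
      _ = As * (N.choose n * N.choose m) := by ring
  have hHsHb : Hs ≤ Hb := by omega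
  -- part 2 (ℕ)
  have hstep : N * (N - p).choose n ≤ (N - n) * N.choose n := by
    obtain ⟨N', hN'⟩ : ∃ N', N = N' + 1 := ⟨N - 1, by omega⟩
    have id1 := Nat.choose_mul_succ_eq N' n
    have mono : (N - p).choose n ≤ N'.choose n := Nat.choose_le_choose _ (by omega)
    calc N * (N - p).choose n ≤ N * N'.choose n := Nat.mul_le_mul_left _ mono
      _ = N'.choose n * (N' + 1) := by rw [hN']; ring
      _ = (N' + 1).choose n * (N' + 1 - n) := id1
      _ = (N - n) * N.choose n := by rw [hN']; exact mul_comm _ _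
  have hNAs : N * As ≤ (N - n) * V := by
    apply Nat.le_of_mul_le_mul_right _ hCn
    calc N * As * N.choose n = N * (As * N.choose n) := by ring
      _ = N * (V * (N - p).choose n) := by rw [hAs]
      _ = V * (N * (N - p).choose n) := by ring
      _ ≤ V * ((N - n) * N.choose n) := Nat.mul_le_mul_left _ hstep
      _ = (N - n) * V * N.choose n := by ring
  have hfin : n * V ≤ 20 * m * Hs := by
    have e : N * V = N * Hs + N * As := by rw [← hs]; ring
    have e2 : (N - n) * V + n * V = N * V := by
      rw [← Nat.add_mul]
      congr 1
      omega
    have h3 : (N - n) * V + n * V ≤ (N - n) * V + N * Hs := by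
      rw [e2, e]
      exact (Nat.add_le_add_left hNAs _).trans (le_of_eq (Nat.add_comm _ _))
    have h1 : n * V ≤ N * Hs := Nat.le_of_add_le_add_left h3
    exact h1.trans (Nat.mul_le_mul_right _ (by omega))
  -- conclude in ℝ
  have hVpos' : (0:ℝ) < V := by exact_mod_cast hVpos
  constructor
  · gcongr
  · have hm0 : (0:ℝ) < 20 * (m:ℝ) := by
      have : (0:ℝ) < (m:ℝ) := by exact_mod_cast (by omega : 0 < m)
      linarith
    rw [div_le_div_iff₀ hm0 hVpos']
    have : n * V ≤ Hs * (20 * m) := by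
      calc n * V ≤ 20 * m * Hs := hfin
        _ = Hs * (20 * m) := by ring
    exact_mod_cast this
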